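/- Let V be a QSO on the infinite-dimensional simplex S and let x₀ ∈ S with supp(x₀) = α ⊆ C, where C = ℕ \ ⋃_k supp(V(e_k)) and x₀ has at least two support points with all coordinates in α positive. If P_{ii,c} = 0 for all i ∈ ℕ and c ∈ C, then ∑_{k ∈ α} V(x₀)_k < 1; in particular x₀ is not a fixed point of V. -/

import Mathlib

open Function
open scoped ENNReal

def IsSimplexPt (x : ℕ → ℝ) : Prop := (∀ i, 0 ≤ x i) ∧ HasSum x 1

def Orth (x y : ℕ → ℝ) : Prop := Disjoint (support x) (support y)

def QSOCoef (P : ℕ → ℕ → ℕ → ℝ) : Prop :=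
  (∀ i j k, 0 ≤ P i j k) ∧ (∀ i j k, P i j k = P j i k) ∧
  (∀ i j, HasSum (fun k => P i j k) 1)

noncomputable def QSO (P : ℕ → ℕ → ℕ → ℝ) (x : ℕ → ℝ) : ℕ → ℝ :=
  fun k => ∑' i, ∑' j, P i j k * x i * x j

def IsOP (V : (ℕ → ℝ) → (ℕ → ℝ)) : Prop :=
  ∀ x y, IsSimplexPt x → IsSimplexPt y → Orth x y → Orth (V x) (V y)

def stdBasis (k : ℕ) : ℕ → ℝ := fun i => if i = k then 1 else 0

theorem no_fixed_point_in_complement (Pc : ℕ → ℕ → ℕ → ℝ) (hP : QSOCoef Pc)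
    (x0 : ℕ → ℝ) (hx0 : IsSimplexPt x0)
    (hsub : support x0 ⊆ Set.univ \ (⋃ k, support (QSO Pc (stdBasis k))))
    (hnt : (support x0).Nontrivial)
    (hdiag : ∀ i c : ℕ, c ∈ Set.univ \ (⋃ k, support (QSO Pc (stdBasis k))) →
      Pc i i c = 0) :
    (∑' k, Set.indicator (support x0) (QSO Pc x0) k) < 1 ∧ QSO Pc x0 ≠ x0 := by
  obtain ⟨hPnn, hPsymm, hPsum⟩ := hP
  obtain ⟨hxnn, hxsum⟩ := hx0
  have hxsummable : Summable x0 := hxsum.summable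
  have hxtsum : ∑' i, x0 i = 1 := hxsum.tsum_eq
  -- ENNReal versions
  set X : ℕ → ℝ≥0∞ := fun i => ENNReal.ofReal (x0 i) with hX
  have hXsum : ∑' i, X i = 1 := by
    rw [← ENNReal.ofReal_tsum_of_nonneg hxnn hxsummable, hxtsum, ENNReal.ofReal_one]
  have hXne : ∀ i, X i ≠ ∞ := fun i => ENNReal.ofReal_ne_top
  have hPtsumE : ∀ i j, ∑' k, ENNReal.ofReal (Pc i j k) = 1 := by
    intro i j
    rw [← ENNReal.ofReal_tsum_of_nonneg (fun k => hPnn i j k) (hPsum i j).summable,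
      (hPsum i j).tsum_eq, ENNReal.ofReal_one]
  have hP1 : ∀ i j k, Pc i j k ≤ 1 := fun i j k =>
    le_hasSum (hPsum i j) k (fun k' _ => hPnn i j k')
  have hx1 : ∀ i, x0 i ≤ 1 := fun i => le_hasSum hxsum i (fun i' _ => hxnn i')
  -- term nonnegativity and bounds
  have htermnn : ∀ i j k, 0 ≤ Pc i j k * x0 i * x0 j := fun i j k =>
    mul_nonneg (mul_nonneg (hPnn i j k) (hxnn i)) (hxnn j)
  have hinner_summable : ∀ i k, Summable (fun j => Pc i j k * x0 i * x0 j) := by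
    intro i k
    apply Summable.of_nonneg_of_le (fun j => htermnn i j k) (fun j => ?_)
      (hxsummable.mul_left (x0 i))
    calc Pc i j k * x0 i * x0 j ≤ 1 * x0 i * x0 j := by
          apply mul_le_mul_of_nonneg_right _ (hxnn j)
          exact mul_le_mul_of_nonneg_right (hP1 i j k) (hxnn i)
      _ = x0 i * x0 j := by ring
  have hinner_nn : ∀ i k, 0 ≤ ∑' j, Pc i j k * x0 i * x0 j := fun i k =>
    tsum_nonneg (fun j => htermnn i j k)
  have hinner_le : ∀ i k, (∑' j, Pc i j k * x0 i * x0 j) ≤ x0 i := by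
    intro i k
    have : (∑' j, Pc i j k * x0 i * x0 j) ≤ ∑' j, x0 i * x0 j := by
      apply Summable.tsum_le_tsum _ (hinner_summable i k) (hxsummable.mul_left (x0 i))
      intro j
      calc Pc i j k * x0 i * x0 j ≤ 1 * x0 i * x0 j := by
            apply mul_le_mul_of_nonneg_right _ (hxnn j)
            exact mul_le_mul_of_nonneg_right (hP1 i j k) (hxnn i)
        _ = x0 i * x0 j := by ring
    calc (∑' j, Pc i j k * x0 i * x0 j) ≤ ∑' j, x0 i * x0 j := this
      _ = x0 i * ∑' j, x0 j := by rw [tsum_mul_left]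
      _ = x0 i := by rw [hxtsum, mul_one]
  have houter_summable : ∀ k, Summable (fun i => ∑' j, Pc i j k * x0 i * x0 j) := by
    intro k
    exact Summable.of_nonneg_of_le (fun i => hinner_nn i k) (fun i => hinner_le i k) hxsummable
  -- ENNReal representation of QSO
  set F : ℕ → ℕ → ℕ → ℝ≥0∞ := fun i j k =>
    ENNReal.ofReal (Pc i j k) * (X i * X j) with hF
  have hFofReal : ∀ i j k, ENNReal.ofReal (Pc i j k * x0 i * x0 j) = F i j k := by
    intro i j k
    rw [hF, hX]
    rw [ENNReal.ofReal_mul (mul_nonneg (hPnn i j k) (hxnn i)),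
      ENNReal.ofReal_mul (hPnn i j k), mul_assoc]
  set G : ℕ → ℝ≥0∞ := fun k => ∑' i, ∑' j, F i j k with hG
  have hQG : ∀ k, ENNReal.ofReal (QSO Pc x0 k) = G k := by
    intro k
    rw [QSO, hG]
    rw [ENNReal.ofReal_tsum_of_nonneg (fun i => hinner_nn i k) (houter_summable k)]
    refine tsum_congr fun i => ?_
    rw [ENNReal.ofReal_tsum_of_nonneg (fun j => htermnn i j k) (hinner_summable i k)]
    exact tsum_congr fun j => hFofReal i j k
  have hQnn : ∀ k, 0 ≤ QSO Pc x0 k := by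
    intro k
    exact tsum_nonneg (fun i => hinner_nn i k)
  -- the off-diagonal majorant
  set O : ℕ → ℝ≥0∞ := fun k => ∑' i, ∑' j, (if j = i then 0 else F i j k) with hO
  have hOle : ∀ k, O k ≤ G k := by
    intro k
    refine ENNReal.tsum_le_tsum fun i => ENNReal.tsum_le_tsum fun j => ?_
    split <;> simp
  -- for k in the support, G k = O k
  have hGO : ∀ k, k ∈ support x0 → G k = O k := by
    intro k hk
    refine tsum_congr fun i => tsum_congr fun j => ?_
    by_cases hji : j = i
    · subst hji
      have : Pc j j k = 0 := hdiag j k (hsub hk)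
      simp [hF, this]
    · simp [hji]
  -- total of O
  have hOtot : ∑' k, O k = ∑' i, X i * ∑' j, (if j = i then 0 else X j) := by
    rw [hO]
    rw [ENNReal.tsum_comm (f := fun k i => ∑' j, (if j = i then 0 else F i j k))]
    refine tsum_congr fun i => ?_
    rw [ENNReal.tsum_comm (f := fun k j => (if j = i then 0 else F i j k)),
      ← ENNReal.tsum_mul_left]
    refine tsum_congr fun j => ?_
    by_cases hji : j = i
    · simp [hji]
    · simp only [hji, if_neg, ite_false]
      rw [ENNReal.tsum_mul_right, hPtsumE, one_mul, mul_comm (X i) (X j)]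
  -- pick a support point
  obtain ⟨i0, hi0, i1, hi1, hne⟩ := hnt
  have hXi0 : X i0 ≠ 0 := by
    simp only [hX, ne_eq, ENNReal.ofReal_eq_zero, not_le]
    exact lt_of_le_of_ne (hxnn i0) (Ne.symm hi0)
  -- strict bound : ∑ O < 1
  have hOs : ∑' k, O k < 1 := by
    rw [hOtot, ← hXsum]
    have hle : ∀ i, X i * (∑' j, (if j = i then 0 else X j)) ≤ X i := by
      intro i
      have : (∑' j, (if j = i then 0 else X j)) ≤ ∑' j, X j :=
        ENNReal.tsum_le_tsum fun j => by split <;> simp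
      calc X i * (∑' j, (if j = i then 0 else X j)) ≤ X i * 1 := by
            exact mul_le_mul_right (this.trans_eq hXsum) _
        _ = X i := mul_one _
    refine ENNReal.tsum_lt_tsum ?_ hle ?_ (i := i0)
    · refine ne_top_of_le_ne_top (ENNReal.one_ne_top) ?_
      calc (∑' i, X i * (∑' j, (if j = i then 0 else X j))) ≤ ∑' i, X i :=
          ENNReal.tsum_le_tsum hle
        _ = 1 := hXsum
    · have hsplit0 := ENNReal.tsum_eq_add_tsum_ite (f := X) i0
      have heq : (∑' (x : ℕ), @ite ℝ≥0∞ (x = i0) (Classical.propDecidable (x = i0)) 0 (X x))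
          = ∑' j, (if j = i0 then 0 else X j) :=
        tsum_congr fun j => by by_cases h : j = i0 <;> simp [h]
      have hsplit : ∑' j, X j = X i0 + ∑' j, (if j = i0 then 0 else X j) := by
        rw [hsplit0, heq]
      have hs_lt : (∑' j, (if j = i0 then 0 else X j)) < 1 := by
        have hsne : (∑' j, (if j = i0 then 0 else X j)) ≠ ∞ := by
          refine ne_top_of_le_ne_top (by simp : (1:ℝ≥0∞) ≠ ∞) ?_
          rw [← hXsum]
          exact ENNReal.tsum_le_tsum fun j => by split <;> simp
        calc (∑' j, (if j = i0 then 0 else X j))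
            < (∑' j, (if j = i0 then 0 else X j)) + X i0 :=
              ENNReal.lt_add_right hsne hXi0
          _ = X i0 + ∑' j, (if j = i0 then 0 else X j) := add_comm _ _
          _ = ∑' j, X j := hsplit.symm
          _ = 1 := hXsum
      calc X i0 * (∑' j, (if j = i0 then 0 else X j)) < X i0 * 1 :=
            (ENNReal.mul_lt_mul_iff_right hXi0 (hXne i0)).2 hs_lt
        _ = X i0 := mul_one _
  -- the indicator sum in ENNReal
  have hindnn : ∀ k, 0 ≤ Set.indicator (support x0) (QSO Pc x0) k := fun k =>
    Set.indicator_nonneg (fun k' _ => hQnn k') k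
  have hindE : ∑' k, ENNReal.ofReal (Set.indicator (support x0) (QSO Pc x0) k) < 1 := by
    refine lt_of_le_of_lt (ENNReal.tsum_le_tsum (g := O) fun k => ?_) hOs
    by_cases hk : k ∈ support x0
    · rw [Set.indicator_of_mem hk, hQG, hGO k hk]
    · rw [Set.indicator_of_notMem hk]
      simp
  have hind_summable : Summable (Set.indicator (support x0) (QSO Pc x0)) := by
    have := ENNReal.summable_toReal (ne_top_of_lt hindE)
    refine this.congr fun k => ?_
    rw [ENNReal.toReal_ofReal (hindnn k)]
  have hmain : (∑' k, Set.indicator (support x0) (QSO Pc x0) k) < 1 := by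
    rw [← ENNReal.ofReal_lt_one,
      ENNReal.ofReal_tsum_of_nonneg hindnn hind_summable]
    exact hindE
  refine ⟨hmain, fun hfix => ?_⟩
  have : Set.indicator (support x0) (QSO Pc x0) = x0 := by
    rw [hfix]
    exact Set.indicator_eq_self.2 subset_rfl
  rw [this, hxtsum] at hmain
  exact lt_irrefl 1 hmain
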